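/- Under the bijection F ↦ (id ⊗ ε) ∘ F between O-colinear maps V → W ⊗_k A and L-colinear maps V → W the following hold. (ii) If the L-colinear maps f : V → W and g : W → Z correspond to the O-colinear maps f̄ : V → W ⊗ A and ḡ : W → Z ⊗ A, then the composite g ∘ f corresponds to (id_Z ⊗ m_A) ∘ (ḡ ⊗ id_A) ∘ f̄, where m_A is the multiplication of A. (iii) If L-colinear maps fᵢ : Vᵢ → Wᵢ (i = 0, 1) correspond to f̄ᵢ : Vᵢ → Wᵢ ⊗ A, then the tensor product map f₀ ⊗ f₁ : V₀ ⊗_k V₁ → W₀ ⊗_k W₁ (which is L-colinear for the diagonal coactions) corresponds to (id_{W₀⊗W₁} ⊗ m_A) ∘ τ₍₂₃₎ ∘ (f̄₀ ⊗ f̄₁), where τ₍₂₃₎ : W₀ ⊗ A ⊗ W₁ ⊗ A → W₀ ⊗ W₁ ⊗ A ⊗ A interchanges the second and third tensor factors. -/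
import Mathlib


open TensorProduct

namespace PaperQuotient

variable {k : Type} [Field k]

section Comod

variable (k) (O : Type) [AddCommGroup O] [Module k O] [Coalgebra k O]

/-- The axioms of a right `O`-comodule structure on `V` given by the coaction `ρ`. -/
structure IsComod {V : Type} [AddCommGroup V] [Module k V]
    (ρ : V →ₗ[k] V ⊗[k] O) : Prop where
  coassoc : ∀ v : V,
    (TensorProduct.assoc k V O O) ((TensorProduct.map ρ (LinearMap.id : O →ₗ[k] O)) (ρ v)) =
      (TensorProduct.map (LinearMap.id : V →ₗ[k] V) (Coalgebra.comul (R := k))) (ρ v)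
  counit : ∀ v : V,
    (TensorProduct.rid k V)
      ((TensorProduct.map (LinearMap.id : V →ₗ[k] V) (Coalgebra.counit (R := k))) (ρ v)) = v

/-- `f : V → W` is colinear with respect to the coactions `ρV` and `ρW`. -/
def IsColinear {V W : Type} [AddCommGroup V] [Module k V] [AddCommGroup W] [Module k W]
    (ρV : V →ₗ[k] V ⊗[k] O) (ρW : W →ₗ[k] W ⊗[k] O) (f : V →ₗ[k] W) : Prop :=
  ∀ v : V, ρW (f v) = (TensorProduct.map f (LinearMap.id : O →ₗ[k] O)) (ρV v)

/-- The map `id ⊗ ε : V ⊗ O → V`. -/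
noncomputable def counitMap {V : Type} [AddCommGroup V] [Module k V] :
    V ⊗[k] O →ₗ[k] V :=
  (TensorProduct.rid k V).toLinearMap ∘ₗ
    TensorProduct.map (LinearMap.id : V →ₗ[k] V) (Coalgebra.counit (R := k))

/-- The "free" right coaction `id_V ⊗ Δ` on `V ⊗ O`. -/
noncomputable def freeCoact {V : Type} [AddCommGroup V] [Module k V] :
    V ⊗[k] O →ₗ[k] (V ⊗[k] O) ⊗[k] O :=
  (TensorProduct.assoc k V O O).symm.toLinearMap ∘ₗ
    LinearMap.lTensor V (Coalgebra.comul (R := k))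

end Comod

section CotensorDef

variable (k)
variable {O : Type} [AddCommGroup O] [Module k O] [Coalgebra k O]
variable {L : Type} [AddCommGroup L] [Module k L]

/-- The difference of the two maps `U ⊗ O → U ⊗ (L ⊗ O)` whose equalizer is the
cotensor product `U □_L O`; here `ql : O → L` is the (linear) quotient map. -/
noncomputable def cotensorObstruction (ql : O →ₗ[k] L)
    {U : Type} [AddCommGroup U] [Module k U] (ρU : U →ₗ[k] U ⊗[k] L) :
    U ⊗[k] O →ₗ[k] U ⊗[k] (L ⊗[k] O) :=
  (TensorProduct.assoc k U L O).toLinearMap ∘ₗ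
      (TensorProduct.map ρU (LinearMap.id : O →ₗ[k] O))
    - TensorProduct.map (LinearMap.id : U →ₗ[k] U)
        ((TensorProduct.map ql (LinearMap.id : O →ₗ[k] O)) ∘ₗ Coalgebra.comul (R := k))

/-- The cotensor product `U □_L O` as a subspace of `U ⊗ O`. -/
noncomputable def cotensor (ql : O →ₗ[k] L)
    {U : Type} [AddCommGroup U] [Module k U] (ρU : U →ₗ[k] U ⊗[k] L) :
    Submodule k (U ⊗[k] O) :=
  LinearMap.ker (cotensorObstruction k ql ρU)

end CotensorDef

section HopfSetup

variable (k)
variable (O : Type) [CommRing O] [HopfAlgebra k O]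

/-- `A` is a Hopf subalgebra of `O`: it is closed under comultiplication and antipode. -/
structure IsHopfSub (A : Subalgebra k O) : Prop where
  comul_mem : ∀ a ∈ A, Coalgebra.comul (R := k) a ∈
    Submodule.span k {x : O ⊗[k] O | ∃ b ∈ A, ∃ c ∈ A, x = b ⊗ₜ[k] c}
  antipode_mem : ∀ a ∈ A, HopfAlgebra.antipode (R := k) a ∈ A

/-- The set of elements of the augmentation ideal `A⁺ = A ∩ ker ε` of `A`. -/
def augSet (A : Subalgebra k O) : Set O :=
  {a : O | a ∈ A ∧ Coalgebra.counit (R := k) a = 0}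

variable (L : Type) [CommRing L] [HopfAlgebra k L]

/-- `q : O → L` realizes `L` as the quotient Hopf algebra `O ⊗_A k = O/(A⁺O)`. -/
structure IsQuotientHopf (A : Subalgebra k O) (q : O →ₐc[k] L) : Prop where
  surj : Function.Surjective q
  ker : RingHom.ker (q : O →ₐ[k] L) = Ideal.span (augSet k O A)

/-- The coaction of `L` on an `O`-comodule obtained by restriction along `q`. -/
noncomputable def resCoact (q : O →ₐc[k] L) {V : Type} [AddCommGroup V] [Module k V]
    (ρV : V →ₗ[k] V ⊗[k] O) : V →ₗ[k] V ⊗[k] L :=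
  (LinearMap.lTensor V (q : O →ₗ[k] L)) ∘ₗ ρV

/-- The multiplication map `(U ⊗ O) ⊗ O → U ⊗ O`, `(u ⊗ g) ⊗ h ↦ u ⊗ gh`. -/
noncomputable def multMap (U : Type) [AddCommGroup U] [Module k U] :
    (U ⊗[k] O) ⊗[k] O →ₗ[k] U ⊗[k] O :=
  (LinearMap.lTensor U (LinearMap.mul' k O)) ∘ₗ (TensorProduct.assoc k U O O).toLinearMap

/-- The diagonal coaction on the tensor product of two comodules. -/
noncomputable def tensorCoact {X Y : Type} [AddCommGroup X] [Module k X]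
    [AddCommGroup Y] [Module k Y]
    (ρX : X →ₗ[k] X ⊗[k] O) (ρY : Y →ₗ[k] Y ⊗[k] O) :
    X ⊗[k] Y →ₗ[k] (X ⊗[k] Y) ⊗[k] O :=
  (TensorProduct.map (LinearMap.id : X ⊗[k] Y →ₗ[k] X ⊗[k] Y) (LinearMap.mul' k O)) ∘ₗ
    (TensorProduct.tensorTensorTensorComm k X O Y O).toLinearMap ∘ₗ
      (TensorProduct.map ρX ρY)

/-- The diagonal coaction on `X ⊗ O`, `x ⊗ a ↦ Σ (x₀ ⊗ a₁) ⊗ x₁a₂`. -/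
noncomputable def diagCoact {X : Type} [AddCommGroup X] [Module k X]
    (ρX : X →ₗ[k] X ⊗[k] O) :
    X ⊗[k] O →ₗ[k] (X ⊗[k] O) ⊗[k] O :=
  tensorCoact k O ρX (Coalgebra.comul (R := k))

end HopfSetup

end PaperQuotient

namespace PaperQuotient

/-- A bundled right `O`-comodule. -/
structure Comod (k O : Type) [Field k] [AddCommGroup O] [Module k O] [Coalgebra k O] where
  carrier : Type
  [acg : AddCommGroup carrier]
  [mod : Module k carrier]
  ρ : carrier →ₗ[k] carrier ⊗[k] O
  comod : IsComod k O ρ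

attribute [instance] Comod.acg Comod.mod

end PaperQuotient

namespace PaperQuotient

open TensorProduct LinearMap

section Aux

variable {k : Type} [Field k] {O : Type} [CommRing O] [HopfAlgebra k O]

lemma counitMap_rTensor {W Z : Type} [AddCommGroup W] [Module k W] [AddCommGroup Z] [Module k Z]
    (g : W →ₗ[k] Z) :
    counitMap k O ∘ₗ LinearMap.rTensor O g = g ∘ₗ counitMap k O := by
  ext w a
  simp [counitMap]

lemma counitMap_multMap (Z : Type) [AddCommGroup Z] [Module k Z] :
    counitMap k O ∘ₗ multMap k O Z
      = counitMap k O ∘ₗ LinearMap.rTensor O (counitMap k O) := by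
  ext z g h
  simp [counitMap, multMap, smul_smul, mul_comm]

/-- The map `((z ⊗ g) ⊗ c) ⊗ h ↦ Σ (z ⊗ g h₁) ⊗ c h₂`. -/
noncomputable def psi (Z : Type) [AddCommGroup Z] [Module k Z] :
    ((Z ⊗[k] O) ⊗[k] O) ⊗[k] O →ₗ[k] (Z ⊗[k] O) ⊗[k] O :=
  (TensorProduct.map (multMap k O Z) (LinearMap.mul' k O)) ∘ₗ
    (TensorProduct.tensorTensorTensorComm k (Z ⊗[k] O) O O O).toLinearMap ∘ₗ
      LinearMap.lTensor ((Z ⊗[k] O) ⊗[k] O) (Coalgebra.comul (R := k))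

lemma diag_mult (Z : Type) [AddCommGroup Z] [Module k Z] (ρZ : Z →ₗ[k] Z ⊗[k] O) :
    diagCoact k O ρZ ∘ₗ multMap k O Z
      = psi Z ∘ₗ LinearMap.rTensor O (diagCoact k O ρZ) := by
  ext z g h
  simp only [LinearMap.comp_apply, AlgebraTensorModule.curry_apply, curry_apply,
    LinearMap.coe_restrictScalars, rTensor_tmul]
  simp only [multMap, diagCoact, tensorCoact, psi, LinearMap.comp_apply,
    LinearEquiv.coe_coe, TensorProduct.assoc_tmul, lTensor_tmul, TensorProduct.map_tmul,
    LinearMap.mul'_apply, LinearMap.id_coe, id_eq, Bialgebra.comul_mul]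
  generalize ρZ z = u
  generalize Coalgebra.comul (R := k) g = cg
  generalize Coalgebra.comul (R := k) h = ch
  induction u using TensorProduct.induction_on with
  | zero => simp
  | add x y hx hy => simp [tmul_add, add_tmul, hx, hy]
  | tmul z₀ z₁ =>
    induction cg using TensorProduct.induction_on with
    | zero => simp
    | add x y hx hy => simp [tmul_add, add_tmul, add_mul, hx, hy]
    | tmul g₁ g₂ =>
      induction ch using TensorProduct.induction_on with
      | zero => simp
      | add x y hx hy => simp [tmul_add, add_tmul, mul_add, hx, hy]
      | tmul h₁ h₂ =>
        simp [Algebra.TensorProduct.tmul_mul_tmul, multMap, mul_assoc]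

lemma diag_mult_gbar {W Z : Type} [AddCommGroup W] [Module k W] [AddCommGroup Z] [Module k Z]
    (ρW : W →ₗ[k] W ⊗[k] O) (ρZ : Z →ₗ[k] Z ⊗[k] O)
    (gbar : W →ₗ[k] Z ⊗[k] O)
    (hgbar : IsColinear k O ρW (diagCoact k O ρZ) gbar) :
    diagCoact k O ρZ ∘ₗ multMap k O Z ∘ₗ LinearMap.rTensor O gbar
      = TensorProduct.map (multMap k O Z ∘ₗ LinearMap.rTensor O gbar) LinearMap.id ∘ₗ
          diagCoact k O ρW := by
  ext w a
  have h1 : diagCoact k O ρZ (multMap k O Z (LinearMap.rTensor O gbar (w ⊗ₜ[k] a)))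
      = psi Z (diagCoact k O ρZ (gbar w) ⊗ₜ[k] a) := by
    have := LinearMap.congr_fun (diag_mult Z ρZ) (gbar w ⊗ₜ[k] a)
    simpa using this
  simp only [LinearMap.comp_apply, AlgebraTensorModule.curry_apply, curry_apply,
    LinearMap.coe_restrictScalars]
  rw [h1, hgbar w]
  simp only [diagCoact, tensorCoact, psi, LinearMap.comp_apply, LinearEquiv.coe_coe,
    TensorProduct.map_tmul, lTensor_tmul, LinearMap.id_coe, id_eq]
  generalize ρW w = u
  generalize Coalgebra.comul (R := k) a = d
  induction u using TensorProduct.induction_on with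
  | zero => simp
  | add x y hx hy => simp [tmul_add, add_tmul, hx, hy]
  | tmul w₀ c =>
    induction d using TensorProduct.induction_on with
    | zero => simp
    | add x y hx hy =>
      simp only [TensorProduct.map_tmul, LinearMap.id_coe, id_eq] at hx hy
      simp [tmul_add, hx, hy]
    | tmul a₁ a₂ => simp


/-- The map `(x ⊗ g) ⊗ (y ⊗ h) ↦ (x ⊗ y) ⊗ gh`. -/
noncomputable def combine (X Y : Type) [AddCommGroup X] [Module k X]
    [AddCommGroup Y] [Module k Y] :
    (X ⊗[k] O) ⊗[k] (Y ⊗[k] O) →ₗ[k] (X ⊗[k] Y) ⊗[k] O :=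
  (TensorProduct.map (LinearMap.id : X ⊗[k] Y →ₗ[k] X ⊗[k] Y) (LinearMap.mul' k O)) ∘ₗ
    (TensorProduct.tensorTensorTensorComm k X O Y O).toLinearMap

lemma tensorCoact_eq_combine {X Y : Type} [AddCommGroup X] [Module k X]
    [AddCommGroup Y] [Module k Y]
    (ρX : X →ₗ[k] X ⊗[k] O) (ρY : Y →ₗ[k] Y ⊗[k] O) :
    tensorCoact k O ρX ρY = combine X Y ∘ₗ TensorProduct.map ρX ρY := by
  rfl

/-- The map `((x ⊗ g) ⊗ c) ⊗ ((y ⊗ h) ⊗ d) ↦ ((x ⊗ y) ⊗ gh) ⊗ cd`. -/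
noncomputable def phi2 (X Y : Type) [AddCommGroup X] [Module k X]
    [AddCommGroup Y] [Module k Y] :
    ((X ⊗[k] O) ⊗[k] O) ⊗[k] ((Y ⊗[k] O) ⊗[k] O) →ₗ[k] ((X ⊗[k] Y) ⊗[k] O) ⊗[k] O :=
  (TensorProduct.map (combine X Y) (LinearMap.mul' k O)) ∘ₗ
    (TensorProduct.tensorTensorTensorComm k (X ⊗[k] O) O (Y ⊗[k] O) O).toLinearMap

set_option maxHeartbeats 1000000 in
lemma diag_combine {X Y : Type} [AddCommGroup X] [Module k X]
    [AddCommGroup Y] [Module k Y]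
    (ρX : X →ₗ[k] X ⊗[k] O) (ρY : Y →ₗ[k] Y ⊗[k] O) :
    diagCoact k O (tensorCoact k O ρX ρY) ∘ₗ combine X Y
      = phi2 X Y ∘ₗ TensorProduct.map (diagCoact k O ρX) (diagCoact k O ρY) := by
  ext x g y h
  simp only [LinearMap.comp_apply, AlgebraTensorModule.curry_apply, curry_apply,
    LinearMap.coe_restrictScalars, TensorProduct.map_tmul]
  simp only [combine, phi2, diagCoact, tensorCoact, LinearMap.comp_apply,
    LinearEquiv.coe_coe, TensorProduct.tensorTensorTensorComm_tmul, TensorProduct.map_tmul,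
    LinearMap.mul'_apply, LinearMap.id_coe, id_eq, Bialgebra.comul_mul]
  generalize ρX x = u
  generalize ρY y = u'
  generalize Coalgebra.comul (R := k) g = d
  generalize Coalgebra.comul (R := k) h = d'
  induction u using TensorProduct.induction_on with
  | zero => simp
  | add s t hs ht =>
    simp only [add_tmul, tmul_add, map_add, add_mul, mul_add] at hs ht ⊢
    rw [hs, ht]
  | tmul x₀ x₁ =>
    induction u' using TensorProduct.induction_on with
    | zero => simp
    | add s t hs ht =>
      simp only [add_tmul, tmul_add, map_add, add_mul, mul_add,
        TensorProduct.tensorTensorTensorComm_tmul, TensorProduct.map_tmul,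
        LinearMap.mul'_apply, LinearMap.id_coe, id_eq] at hs ht ⊢
      rw [hs, ht]
    | tmul y₀ y₁ =>
      induction d using TensorProduct.induction_on with
      | zero => simp
      | add s t hs ht =>
        simp only [add_tmul, tmul_add, map_add, add_mul, mul_add,
          TensorProduct.tensorTensorTensorComm_tmul, TensorProduct.map_tmul,
          LinearMap.mul'_apply, LinearMap.id_coe, id_eq] at hs ht ⊢
        rw [hs, ht]
      | tmul g₁ g₂ =>
        induction d' using TensorProduct.induction_on with
        | zero => simp
        | add s t hs ht =>
          simp only [add_tmul, tmul_add, map_add, add_mul, mul_add,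
            TensorProduct.tensorTensorTensorComm_tmul, TensorProduct.map_tmul,
            LinearMap.mul'_apply, LinearMap.id_coe, id_eq] at hs ht ⊢
          rw [hs, ht]
        | tmul h₁ h₂ =>
          simp only [Algebra.TensorProduct.tmul_mul_tmul,
            TensorProduct.tensorTensorTensorComm_tmul, TensorProduct.map_tmul,
            LinearMap.mul'_apply, LinearMap.id_coe, id_eq, combine,
            LinearMap.comp_apply, LinearEquiv.coe_coe]
          congr 1
          ring

lemma phi2_map {V₀ V₁ X Y : Type} [AddCommGroup V₀] [Module k V₀] [AddCommGroup V₁]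
    [Module k V₁] [AddCommGroup X] [Module k X] [AddCommGroup Y] [Module k Y]
    (fbar₀ : V₀ →ₗ[k] X ⊗[k] O) (fbar₁ : V₁ →ₗ[k] Y ⊗[k] O) :
    phi2 X Y ∘ₗ TensorProduct.map (TensorProduct.map fbar₀ LinearMap.id)
        (TensorProduct.map fbar₁ LinearMap.id)
      = TensorProduct.map (combine X Y ∘ₗ TensorProduct.map fbar₀ fbar₁) LinearMap.id ∘ₗ
          combine V₀ V₁ := by
  ext v c v' c'
  simp [phi2, combine]

lemma counitMap_combine {X Y : Type} [AddCommGroup X] [Module k X]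
    [AddCommGroup Y] [Module k Y] :
    counitMap k O ∘ₗ combine X Y
      = TensorProduct.map (counitMap k O) (counitMap k O) := by
  ext x g y h
  simp [counitMap, combine, smul_tmul', smul_smul, tmul_smul, mul_comm]

section Quot

variable {L : Type} [CommRing L] [HopfAlgebra k L] (q : O →ₐc[k] L)

lemma resCoact_tensorCoact {X Y : Type} [AddCommGroup X] [Module k X]
    [AddCommGroup Y] [Module k Y]
    (ρX : X →ₗ[k] X ⊗[k] O) (ρY : Y →ₗ[k] Y ⊗[k] O) :
    resCoact k O L q (tensorCoact k O ρX ρY)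
      = (TensorProduct.map (LinearMap.id : X ⊗[k] Y →ₗ[k] X ⊗[k] Y) (LinearMap.mul' k L)) ∘ₗ
          (TensorProduct.tensorTensorTensorComm k X L Y L).toLinearMap ∘ₗ
            TensorProduct.map (resCoact k O L q ρX) (resCoact k O L q ρY) := by
  ext x y
  simp only [resCoact, tensorCoact, LinearMap.comp_apply, AlgebraTensorModule.curry_apply,
    curry_apply, LinearMap.coe_restrictScalars, TensorProduct.map_tmul, LinearEquiv.coe_coe]
  generalize ρX x = u
  generalize ρY y = u'
  induction u using TensorProduct.induction_on with
  | zero => simp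
  | add s t hs ht => simp [tmul_add, add_tmul, hs, ht]
  | tmul x₀ x₁ =>
    induction u' using TensorProduct.induction_on with
    | zero => simp
    | add s t hs ht => simp [tmul_add, add_tmul, hs, ht]
    | tmul y₀ y₁ => simp [map_mul]

end Quot

section Range

variable (A : Subalgebra k O)

lemma range_mult {W Z : Type} [AddCommGroup W] [Module k W] [AddCommGroup Z] [Module k Z]
    (gbar : W →ₗ[k] Z ⊗[k] O)
    (hgbarrange : LinearMap.range gbar ≤
      LinearMap.range (LinearMap.lTensor Z A.toSubmodule.subtype))
    {x : W ⊗[k] O} (hx : x ∈ LinearMap.range (LinearMap.lTensor W A.toSubmodule.subtype)) :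
    multMap k O Z (LinearMap.rTensor O gbar x)
      ∈ LinearMap.range (LinearMap.lTensor Z A.toSubmodule.subtype) := by
  obtain ⟨y, rfl⟩ := hx
  induction y using TensorProduct.induction_on with
  | zero => simp
  | add s t hs ht => rw [map_add, map_add, map_add]; exact Submodule.add_mem _ hs ht
  | tmul w a =>
    simp only [lTensor_tmul, rTensor_tmul]
    obtain ⟨t, ht⟩ := hgbarrange ⟨w, rfl⟩
    rw [← ht]
    have key : ∀ t : Z ⊗[k] A.toSubmodule,
        multMap k O Z ((LinearMap.lTensor Z A.toSubmodule.subtype) t ⊗ₜ[k]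
            A.toSubmodule.subtype a)
          ∈ LinearMap.range (LinearMap.lTensor Z A.toSubmodule.subtype) := by
      intro t
      induction t using TensorProduct.induction_on with
      | zero => simp
      | add s t hs ht =>
        rw [map_add, add_tmul, map_add]
        exact Submodule.add_mem _ hs ht
      | tmul z b =>
        refine ⟨z ⊗ₜ[k] ⟨(b : O) * (a : O), A.mul_mem b.2 a.2⟩, ?_⟩
        simp [multMap]
    exact key t

lemma range_combine {X Y : Type} [AddCommGroup X] [Module k X]
    [AddCommGroup Y] [Module k Y]
    {x : X ⊗[k] O} (hx : x ∈ LinearMap.range (LinearMap.lTensor X A.toSubmodule.subtype))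
    {y : Y ⊗[k] O} (hy : y ∈ LinearMap.range (LinearMap.lTensor Y A.toSubmodule.subtype)) :
    combine X Y (x ⊗ₜ[k] y)
      ∈ LinearMap.range (LinearMap.lTensor (X ⊗[k] Y) A.toSubmodule.subtype) := by
  obtain ⟨s, rfl⟩ := hx
  obtain ⟨t, rfl⟩ := hy
  induction s using TensorProduct.induction_on with
  | zero => simp
  | add s₁ s₂ h₁ h₂ =>
    rw [map_add, add_tmul, map_add]
    exact Submodule.add_mem _ h₁ h₂
  | tmul x₀ a =>
    induction t using TensorProduct.induction_on with
    | zero => simp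
    | add t₁ t₂ h₁ h₂ =>
      rw [map_add, tmul_add, map_add]
      exact Submodule.add_mem _ h₁ h₂
    | tmul y₀ b =>
      refine ⟨(x₀ ⊗ₜ[k] y₀) ⊗ₜ[k] ⟨(a : O) * (b : O), A.mul_mem a.2 b.2⟩, ?_⟩
      simp [combine]

end Range

end Aux

end PaperQuotient

set_option maxHeartbeats 1000000
open PaperQuotient in
/-- Under the bijection `F ↦ (id ⊗ ε) ∘ F` between `O`-colinear maps
`V → W ⊗ A` and `L`-colinear maps `V → W`: (ii) composition corresponds to
`(id ⊗ m_A) ∘ (ḡ ⊗ id_A) ∘ f̄`, and (iii) tensor product corresponds to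
`(id ⊗ m_A) ∘ τ₍₂₃₎ ∘ (f̄₀ ⊗ f̄₁)`. -/
theorem statement10
    (k : Type) [Field k] (O : Type) [CommRing O] [HopfAlgebra k O]
    (A : Subalgebra k O) (hA : IsHopfSub k O A)
    (L : Type) [CommRing L] [HopfAlgebra k L]
    (q : O →ₐc[k] L) (hq : IsQuotientHopf k O L A q)
    -- data for (ii)
    (V : Type) [AddCommGroup V] [Module k V]
    (ρV : V →ₗ[k] V ⊗[k] O) (hV : IsComod k O ρV)
    (W : Type) [AddCommGroup W] [Module k W]
    (ρW : W →ₗ[k] W ⊗[k] O) (hW : IsComod k O ρW)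
    (Z : Type) [AddCommGroup Z] [Module k Z]
    (ρZ : Z →ₗ[k] Z ⊗[k] O) (hZ : IsComod k O ρZ)
    (f : V →ₗ[k] W) (hf : IsColinear k L (resCoact k O L q ρV) (resCoact k O L q ρW) f)
    (g : W →ₗ[k] Z) (hg : IsColinear k L (resCoact k O L q ρW) (resCoact k O L q ρZ) g)
    (fbar : V →ₗ[k] W ⊗[k] O)
    (hfbar : IsColinear k O ρV (diagCoact k O ρW) fbar)
    (hfbarrange : LinearMap.range fbar ≤
      LinearMap.range (LinearMap.lTensor W A.toSubmodule.subtype))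
    (hfbarf : (counitMap k O) ∘ₗ fbar = f)
    (gbar : W →ₗ[k] Z ⊗[k] O)
    (hgbar : IsColinear k O ρW (diagCoact k O ρZ) gbar)
    (hgbarrange : LinearMap.range gbar ≤
      LinearMap.range (LinearMap.lTensor Z A.toSubmodule.subtype))
    (hgbarg : (counitMap k O) ∘ₗ gbar = g)
    -- data for (iii)
    (V₀ : Type) [AddCommGroup V₀] [Module k V₀]
    (ρV₀ : V₀ →ₗ[k] V₀ ⊗[k] O) (hV₀ : IsComod k O ρV₀)
    (V₁ : Type) [AddCommGroup V₁] [Module k V₁]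
    (ρV₁ : V₁ →ₗ[k] V₁ ⊗[k] O) (hV₁ : IsComod k O ρV₁)
    (W₀ : Type) [AddCommGroup W₀] [Module k W₀]
    (ρW₀ : W₀ →ₗ[k] W₀ ⊗[k] O) (hW₀ : IsComod k O ρW₀)
    (W₁ : Type) [AddCommGroup W₁] [Module k W₁]
    (ρW₁ : W₁ →ₗ[k] W₁ ⊗[k] O) (hW₁ : IsComod k O ρW₁)
    (f₀ : V₀ →ₗ[k] W₀)
    (hf₀ : IsColinear k L (resCoact k O L q ρV₀) (resCoact k O L q ρW₀) f₀)
    (f₁ : V₁ →ₗ[k] W₁)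
    (hf₁ : IsColinear k L (resCoact k O L q ρV₁) (resCoact k O L q ρW₁) f₁)
    (fbar₀ : V₀ →ₗ[k] W₀ ⊗[k] O)
    (hfbar₀ : IsColinear k O ρV₀ (diagCoact k O ρW₀) fbar₀)
    (hfbar₀range : LinearMap.range fbar₀ ≤
      LinearMap.range (LinearMap.lTensor W₀ A.toSubmodule.subtype))
    (hfbar₀f : (counitMap k O) ∘ₗ fbar₀ = f₀)
    (fbar₁ : V₁ →ₗ[k] W₁ ⊗[k] O)
    (hfbar₁ : IsColinear k O ρV₁ (diagCoact k O ρW₁) fbar₁)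
    (hfbar₁range : LinearMap.range fbar₁ ≤
      LinearMap.range (LinearMap.lTensor W₁ A.toSubmodule.subtype))
    (hfbar₁f : (counitMap k O) ∘ₗ fbar₁ = f₁) :
    -- (ii) `g ∘ f` corresponds to `(id_Z ⊗ m_A) ∘ (ḡ ⊗ id_A) ∘ f̄`
    (IsColinear k O ρV (diagCoact k O ρZ)
        ((multMap k O Z) ∘ₗ (LinearMap.rTensor O gbar) ∘ₗ fbar) ∧
      LinearMap.range ((multMap k O Z) ∘ₗ (LinearMap.rTensor O gbar) ∘ₗ fbar) ≤
        LinearMap.range (LinearMap.lTensor Z A.toSubmodule.subtype) ∧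
      (counitMap k O) ∘ₗ ((multMap k O Z) ∘ₗ (LinearMap.rTensor O gbar) ∘ₗ fbar) =
        g ∘ₗ f) ∧
    -- (iii) `f₀ ⊗ f₁` is `L`-colinear for the diagonal coactions and corresponds to
    -- `(id ⊗ m_A) ∘ τ₍₂₃₎ ∘ (f̄₀ ⊗ f̄₁)`
    (IsColinear k L (resCoact k O L q (tensorCoact k O ρV₀ ρV₁))
        (resCoact k O L q (tensorCoact k O ρW₀ ρW₁)) (TensorProduct.map f₀ f₁) ∧
      IsColinear k O (tensorCoact k O ρV₀ ρV₁) (diagCoact k O (tensorCoact k O ρW₀ ρW₁))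
        ((TensorProduct.map (LinearMap.id : W₀ ⊗[k] W₁ →ₗ[k] W₀ ⊗[k] W₁) (LinearMap.mul' k O)) ∘ₗ
          (TensorProduct.tensorTensorTensorComm k W₀ O W₁ O).toLinearMap ∘ₗ
            (TensorProduct.map fbar₀ fbar₁)) ∧
      LinearMap.range
          ((TensorProduct.map (LinearMap.id : W₀ ⊗[k] W₁ →ₗ[k] W₀ ⊗[k] W₁) (LinearMap.mul' k O)) ∘ₗ
            (TensorProduct.tensorTensorTensorComm k W₀ O W₁ O).toLinearMap ∘ₗ
              (TensorProduct.map fbar₀ fbar₁)) ≤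
        LinearMap.range (LinearMap.lTensor (W₀ ⊗[k] W₁) A.toSubmodule.subtype) ∧
      (counitMap k O) ∘ₗ
          ((TensorProduct.map (LinearMap.id : W₀ ⊗[k] W₁ →ₗ[k] W₀ ⊗[k] W₁) (LinearMap.mul' k O)) ∘ₗ
            (TensorProduct.tensorTensorTensorComm k W₀ O W₁ O).toLinearMap ∘ₗ
              (TensorProduct.map fbar₀ fbar₁)) =
        TensorProduct.map f₀ f₁) := by
  constructor
  · refine ⟨?_, ?_, ?_⟩
    · -- (ii) colinearity
      intro v
      have h1 := LinearMap.congr_fun (diag_mult_gbar ρW ρZ gbar hgbar) (fbar v)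
      simp only [LinearMap.comp_apply] at h1 ⊢
      rw [h1, hfbar v, ← LinearMap.comp_apply (TensorProduct.map _ _),
        ← TensorProduct.map_comp]
      rfl
    · -- (ii) range
      rintro x ⟨v, rfl⟩
      simp only [LinearMap.comp_apply]
      exact range_mult A gbar hgbarrange (hfbarrange ⟨v, rfl⟩)
    · -- (ii) counit
      calc counitMap k O ∘ₗ (multMap k O Z ∘ₗ LinearMap.rTensor O gbar ∘ₗ fbar)
          = ((counitMap k O ∘ₗ multMap k O Z) ∘ₗ LinearMap.rTensor O gbar) ∘ₗ fbar := rfl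
        _ = ((counitMap k O ∘ₗ LinearMap.rTensor O (counitMap k O)) ∘ₗ
              LinearMap.rTensor O gbar) ∘ₗ fbar := by rw [counitMap_multMap]
        _ = (counitMap k O ∘ₗ LinearMap.rTensor O (counitMap k O ∘ₗ gbar)) ∘ₗ fbar := by
              rw [LinearMap.comp_assoc (LinearMap.rTensor O gbar), ← LinearMap.rTensor_comp]
        _ = (counitMap k O ∘ₗ LinearMap.rTensor O g) ∘ₗ fbar := by rw [hgbarg]
        _ = (g ∘ₗ counitMap k O) ∘ₗ fbar := by rw [counitMap_rTensor]
        _ = g ∘ₗ f := by rw [LinearMap.comp_assoc, hfbarf]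
  · refine ⟨?_, ?_, ?_, ?_⟩
    · -- (iii) L-colinearity of the tensor product map
      have hLmap : resCoact k O L q (tensorCoact k O ρW₀ ρW₁) ∘ₗ TensorProduct.map f₀ f₁
          = TensorProduct.map (TensorProduct.map f₀ f₁) LinearMap.id ∘ₗ
              resCoact k O L q (tensorCoact k O ρV₀ ρV₁) := by
        rw [resCoact_tensorCoact, resCoact_tensorCoact]
        ext v₀ v₁
        simp only [LinearMap.comp_apply, AlgebraTensorModule.curry_apply, curry_apply,
          LinearMap.coe_restrictScalars, TensorProduct.map_tmul, LinearEquiv.coe_coe]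
        rw [hf₀ v₀, hf₁ v₁]
        generalize resCoact k O L q ρV₀ v₀ = u
        generalize resCoact k O L q ρV₁ v₁ = u'
        induction u using TensorProduct.induction_on with
        | zero => simp
        | add s t hs ht => simp only [map_add, add_tmul, tmul_add] at hs ht ⊢; rw [hs, ht]
        | tmul a b =>
          induction u' using TensorProduct.induction_on with
          | zero => simp
          | add s t hs ht =>
            simp only [map_add, add_tmul, tmul_add, TensorProduct.map_tmul,
              LinearMap.id_coe, id_eq] at hs ht ⊢
            rw [hs, ht]
          | tmul c d => simp
      exact fun v => LinearMap.congr_fun hLmap v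
    · -- (iii) O-colinearity of the lifted map
      have h2 : diagCoact k O ρW₀ ∘ₗ fbar₀ = TensorProduct.map fbar₀ LinearMap.id ∘ₗ ρV₀ :=
        LinearMap.ext hfbar₀
      have h3 : diagCoact k O ρW₁ ∘ₗ fbar₁ = TensorProduct.map fbar₁ LinearMap.id ∘ₗ ρV₁ :=
        LinearMap.ext hfbar₁
      have hmap : diagCoact k O (tensorCoact k O ρW₀ ρW₁) ∘ₗ
            (combine W₀ W₁ ∘ₗ TensorProduct.map fbar₀ fbar₁)
          = TensorProduct.map (combine W₀ W₁ ∘ₗ TensorProduct.map fbar₀ fbar₁) LinearMap.id ∘ₗ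
              tensorCoact k O ρV₀ ρV₁ := by
        calc diagCoact k O (tensorCoact k O ρW₀ ρW₁) ∘ₗ
              (combine W₀ W₁ ∘ₗ TensorProduct.map fbar₀ fbar₁)
            = (diagCoact k O (tensorCoact k O ρW₀ ρW₁) ∘ₗ combine W₀ W₁) ∘ₗ
                TensorProduct.map fbar₀ fbar₁ := rfl
          _ = (phi2 W₀ W₁ ∘ₗ
                TensorProduct.map (diagCoact k O ρW₀) (diagCoact k O ρW₁)) ∘ₗ
                TensorProduct.map fbar₀ fbar₁ := by rw [diag_combine]
          _ = phi2 W₀ W₁ ∘ₗ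
                TensorProduct.map (diagCoact k O ρW₀ ∘ₗ fbar₀) (diagCoact k O ρW₁ ∘ₗ fbar₁) := by
                rw [LinearMap.comp_assoc, ← TensorProduct.map_comp]
          _ = phi2 W₀ W₁ ∘ₗ
                TensorProduct.map (TensorProduct.map fbar₀ LinearMap.id ∘ₗ ρV₀)
                  (TensorProduct.map fbar₁ LinearMap.id ∘ₗ ρV₁) := by rw [h2, h3]
          _ = (phi2 W₀ W₁ ∘ₗ
                TensorProduct.map (TensorProduct.map fbar₀ LinearMap.id)
                  (TensorProduct.map fbar₁ LinearMap.id)) ∘ₗ TensorProduct.map ρV₀ ρV₁ := by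
                rw [TensorProduct.map_comp, ← LinearMap.comp_assoc]
          _ = (TensorProduct.map (combine W₀ W₁ ∘ₗ TensorProduct.map fbar₀ fbar₁)
                LinearMap.id ∘ₗ combine V₀ V₁) ∘ₗ TensorProduct.map ρV₀ ρV₁ := by
                rw [phi2_map]
          _ = TensorProduct.map (combine W₀ W₁ ∘ₗ TensorProduct.map fbar₀ fbar₁)
                LinearMap.id ∘ₗ tensorCoact k O ρV₀ ρV₁ := rfl
      exact fun v => LinearMap.congr_fun hmap v
    · -- (iii) range
      rintro x ⟨v, rfl⟩
      simp only [LinearMap.comp_apply]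
      induction v using TensorProduct.induction_on with
      | zero => rw [map_zero, map_zero, map_zero]; exact Submodule.zero_mem _
      | add s t hs ht =>
        rw [map_add, map_add, map_add]
        exact Submodule.add_mem _ hs ht
      | tmul v₀ v₁ =>
        have := range_combine (k := k) (O := O) A
          (hfbar₀range ⟨v₀, rfl⟩) (hfbar₁range ⟨v₁, rfl⟩)
        simpa [combine] using this
    · -- (iii) counit
      calc counitMap k O ∘ₗ
            ((TensorProduct.map (LinearMap.id : W₀ ⊗[k] W₁ →ₗ[k] W₀ ⊗[k] W₁)
              (LinearMap.mul' k O)) ∘ₗ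
              (TensorProduct.tensorTensorTensorComm k W₀ O W₁ O).toLinearMap ∘ₗ
                (TensorProduct.map fbar₀ fbar₁))
          = (counitMap k O ∘ₗ combine W₀ W₁) ∘ₗ TensorProduct.map fbar₀ fbar₁ := rfl
        _ = TensorProduct.map (counitMap k O) (counitMap k O) ∘ₗ
              TensorProduct.map fbar₀ fbar₁ := by rw [counitMap_combine]
        _ = TensorProduct.map (counitMap k O ∘ₗ fbar₀) (counitMap k O ∘ₗ fbar₁) := by
              rw [← TensorProduct.map_comp]
        _ = TensorProduct.map f₀ f₁ := by rw [hfbar₀f, hfbar₁f]
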